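/- Suppose a measurable function f on a probability space satisfies ||f||_p ≤ (p₀ - p)^{-(1+Δ)/p₀} for all p ∈ [1, p₀), where p₀ > 1 and Δ ≥ 0. Then there exists a constant C₂ such that T_f(t) ≤ C₂ · t^{-p₀} (log t)^{Δ+1} for all t > 2, obtained by optimizing the Chebyshev bound T_f(t) ≤ ||f||_p^p / t^p over p ∈ [1, p₀). -/

import Mathlib

open MeasureTheory ENNReal Set Filter

/-- Tail (distribution) function `T_f(t) = μ {x : |f x| ≥ t}`. -/
noncomputable def tailFn {X : Type*} [MeasurableSpace X] (μ : Measure X)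
    (f : X → ℝ) (t : ℝ) : ℝ≥0∞ := μ {x | t ≤ |f x|}

/-- Decreasing rearrangement `f*(s) = inf {t ≥ 0 : T_f(t) ≤ s}`. -/
noncomputable def rearr {X : Type*} [MeasurableSpace X] (μ : Measure X)
    (f : X → ℝ) (s : ℝ) : ℝ :=
  sInf {t : ℝ | 0 ≤ t ∧ tailFn μ f t ≤ ENNReal.ofReal s}

/-- `f**(t) = t⁻¹ ∫_0^t f*(s) ds`. -/
noncomputable def rr {X : Type*} [MeasurableSpace X] (μ : Measure X)
    (f : X → ℝ) (t : ℝ) : ℝ := t⁻¹ * ∫ s in (0:ℝ)..t, rearr μ f s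

/-- `‖f‖*_w = sup_{t>0} w(t) f*(t)` (as an `ℝ≥0∞`-valued functional). -/
noncomputable def wnormStar {X : Type*} [MeasurableSpace X] (μ : Measure X)
    (w : ℝ → ℝ) (f : X → ℝ) : ℝ≥0∞ :=
  ⨆ t ∈ Set.Ioi (0:ℝ), ENNReal.ofReal (w t * rearr μ f t)

/-- `‖f‖_w = sup_{t>0} w(t) f**(t)` (as an `ℝ≥0∞`-valued functional). -/
noncomputable def wnorm' {X : Type*} [MeasurableSpace X] (μ : Measure X)
    (w : ℝ → ℝ) (f : X → ℝ) : ℝ≥0∞ :=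
  ⨆ t ∈ Set.Ioi (0:ℝ), ENNReal.ofReal (w t * rr μ f t)

/-- `γ(w) = sup_{t>0} (w(t)/t) ∫_0^t du / w(u)`. -/
noncomputable def gammaW (w : ℝ → ℝ) : ℝ≥0∞ :=
  ⨆ t ∈ Set.Ioi (0:ℝ), ENNReal.ofReal ((w t / t) * ∫ s in (0:ℝ)..t, (w s)⁻¹)


-- a^(-q) ≤ a^(-m) + 1 for a > 0, 0 ≤ q ≤ m
lemma aux_rpow_bound {a q m : ℝ} (ha : 0 < a) (hq : 0 ≤ q) (hqm : q ≤ m) :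
    a ^ (-q) ≤ a ^ (-m) + 1 := by
  rcases le_or_gt 1 a with h | h
  · have h1 : a ^ (-q) ≤ a ^ (0:ℝ) := Real.rpow_le_rpow_of_exponent_le h (by linarith)
    have h2 : (0:ℝ) ≤ a ^ (-m) := (Real.rpow_pos_of_pos ha _).le
    simp only [Real.rpow_zero] at h1; linarith
  · have h1 : a ^ (-q) ≤ a ^ (-m) := Real.rpow_le_rpow_of_exponent_ge ha h.le (by linarith)
    linarith

-- a^q ≤ a^m + 1 for a > 0, 0 ≤ q ≤ m
lemma aux_rpow_bound' {a q m : ℝ} (ha : 0 < a) (hq : 0 ≤ q) (hqm : q ≤ m) :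
    a ^ q ≤ a ^ m + 1 := by
  have := aux_rpow_bound ha hq hqm (a := a)
  rcases le_or_gt 1 a with h | h
  · have h1 : a ^ q ≤ a ^ m := Real.rpow_le_rpow_of_exponent_le h hqm
    linarith
  · have h1 : a ^ q ≤ a ^ (0:ℝ) := Real.rpow_le_rpow_of_exponent_ge ha h.le hq
    have h2 : (0:ℝ) ≤ a ^ m := (Real.rpow_pos_of_pos ha _).le
    simp only [Real.rpow_zero] at h1; linarith

theorem stmt16 {X : Type*} [MeasurableSpace X] (P : Measure X) [IsProbabilityMeasure P]
    (f : X → ℝ) (hf : Measurable f) (p₀ Δ : ℝ) (hp₀ : 1 < p₀) (hΔ : 0 ≤ Δ)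
    (hnorm : ∀ p ∈ Set.Ico (1:ℝ) p₀,
      (∫⁻ x, ENNReal.ofReal (|f x| ^ p) ∂P) ^ ((1:ℝ)/p)
        ≤ ENNReal.ofReal ((p₀ - p) ^ (-(1 + Δ) / p₀))) :
    ∃ C₂ : ℝ, 0 < C₂ ∧ ∀ t : ℝ, 2 < t →
      tailFn P f t ≤ ENNReal.ofReal (C₂ * t ^ (-p₀) * (Real.log t) ^ (Δ + 1)) := by
  have hl2 : (0:ℝ) < Real.log 2 := Real.log_pos (by norm_num)
  set C₂ : ℝ := Real.exp p₀ *
      (((p₀ - 1) ^ (-(Δ+1)) + 2) * (Real.log 2) ^ (-(Δ+1)) + p₀ ^ (-(Δ+1))) with hC₂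
  have hC₂pos : 0 < C₂ := by
    have h1 : (0:ℝ) < (p₀ - 1) ^ (-(Δ+1)) := Real.rpow_pos_of_pos (by linarith) _
    have h2 : (0:ℝ) < (Real.log 2) ^ (-(Δ+1)) := Real.rpow_pos_of_pos hl2 _
    have h3 : (0:ℝ) < p₀ ^ (-(Δ+1)) := Real.rpow_pos_of_pos (by linarith) _
    have := Real.exp_pos p₀
    positivity
  refine ⟨C₂, hC₂pos, ?_⟩
  intro t ht
  have ht0 : (0:ℝ) < t := by linarith
  set L := Real.log t with hLdef
  have hL2 : Real.log 2 < L := Real.log_lt_log (by norm_num) ht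
  have hL0 : 0 < L := lt_trans hl2 hL2
  set ε : ℝ := min (p₀ - 1) (p₀ / L) with hεdef
  have hε0 : 0 < ε := lt_min (by linarith) (div_pos (by linarith) hL0)
  have hεle : ε ≤ p₀ - 1 := min_le_left _ _
  set p : ℝ := p₀ - ε with hpdef
  have hp1 : 1 ≤ p := by simp only [hpdef]; linarith
  have hpp : p < p₀ := by simp only [hpdef]; linarith
  have hp0 : (0:ℝ) < p := by linarith
  have hεeq : p₀ - p = ε := by simp [hpdef]
  -- Chebyshev
  have hmeas : AEMeasurable (fun x => ENNReal.ofReal (|f x| ^ p)) P :=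
    (((Real.continuous_rpow_const hp0.le).measurable.comp hf.abs).ennreal_ofReal).aemeasurable
  have cheb0 : ENNReal.ofReal (t ^ p) * tailFn P f t
      ≤ ∫⁻ x, ENNReal.ofReal (|f x| ^ p) ∂P := by
    refine le_trans ?_ (mul_meas_ge_le_lintegral₀ hmeas (ENNReal.ofReal (t ^ p)))
    refine mul_le_mul_right (measure_mono ?_) _
    intro x hx
    exact ENNReal.ofReal_le_ofReal (Real.rpow_le_rpow ht0.le hx hp0.le)
  have cheb : tailFn P f t
      ≤ ENNReal.ofReal (t ^ (-p)) * ∫⁻ x, ENNReal.ofReal (|f x| ^ p) ∂P := by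
    have htp : (0:ℝ) < t ^ p := Real.rpow_pos_of_pos ht0 _
    have hne : ENNReal.ofReal (t ^ p) ≠ 0 := by
      simp [ENNReal.ofReal_eq_zero, not_le, htp]
    have hnetop : ENNReal.ofReal (t ^ p) ≠ ⊤ := ENNReal.ofReal_ne_top
    have heq : ENNReal.ofReal (t ^ (-p)) = (ENNReal.ofReal (t ^ p))⁻¹ := by
      rw [← ENNReal.ofReal_inv_of_pos htp, ← Real.rpow_neg ht0.le]
    rw [mul_comm] at cheb0
    rw [← ENNReal.le_div_iff_mul_le (Or.inl hne) (Or.inl hnetop)] at cheb0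
    rwa [ENNReal.div_eq_inv_mul, ← heq] at cheb0
  have hint : ∫⁻ x, ENNReal.ofReal (|f x| ^ p) ∂P
      ≤ ENNReal.ofReal (ε ^ (-(1 + Δ) / p₀ * p)) := by
    have h := hnorm p ⟨hp1, hpp⟩
    rw [hεeq] at h
    have h2 := ENNReal.rpow_le_rpow h hp0.le
    rwa [← ENNReal.rpow_mul, one_div, inv_mul_cancel₀ (ne_of_gt hp0), ENNReal.rpow_one,
      ENNReal.ofReal_rpow_of_nonneg (Real.rpow_nonneg hε0.le _) hp0.le,
      ← Real.rpow_mul hε0.le] at h2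
  -- the real-number estimate
  have key : t ^ (-p) * ε ^ (-(1 + Δ) / p₀ * p) ≤ C₂ * t ^ (-p₀) * L ^ (Δ + 1) := by
    have hq0 : 0 ≤ (1 + Δ) / p₀ * p := by positivity
    have hqm : (1 + Δ) / p₀ * p ≤ Δ + 1 := by
      rw [div_mul_eq_mul_div, div_le_iff₀ (by linarith)]
      nlinarith [hpp.le]
    -- t^(-p) ≤ exp p₀ * t^(-p₀)
    have h1 : t ^ (-p) ≤ Real.exp p₀ * t ^ (-p₀) := by
      have hsplit : t ^ (-p) = t ^ (-p₀) * t ^ ε := by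
        rw [← Real.rpow_add ht0, hpdef]; ring_nf
      rw [hsplit, mul_comm]
      refine mul_le_mul_of_nonneg_right ?_ (Real.rpow_pos_of_pos ht0 _).le
      rw [Real.rpow_def_of_pos ht0]
      refine Real.exp_le_exp.mpr ?_
      have hεL : ε ≤ p₀ / L := min_le_right _ _
      calc Real.log t * ε = ε * L := by rw [mul_comm]
        _ ≤ (p₀ / L) * L := mul_le_mul_of_nonneg_right hεL hL0.le
        _ = p₀ := by field_simp
    -- ε^(-q) ≤ stuff * L^(Δ+1)
    have h2 : ε ^ (-(1 + Δ) / p₀ * p)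
        ≤ (((p₀ - 1) ^ (-(Δ+1)) + 2) * (Real.log 2) ^ (-(Δ+1)) + p₀ ^ (-(Δ+1))) * L ^ (Δ + 1) := by
      have hrw : -(1 + Δ) / p₀ * p = -((1 + Δ) / p₀ * p) := by ring
      rw [hrw]
      have honele : (1:ℝ) ≤ (L / Real.log 2) ^ (Δ + 1) :=
        Real.one_le_rpow ((one_le_div hl2).mpr hL2.le) (by linarith)
      have hLl2 : (L / Real.log 2) ^ (Δ + 1) = L ^ (Δ + 1) * (Real.log 2) ^ (-(Δ+1)) := by
        rw [Real.div_rpow hL0.le hl2.le, div_eq_mul_inv, ← Real.rpow_neg hl2.le]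
      have hLp0 : (L / p₀) ^ (Δ + 1) = L ^ (Δ + 1) * p₀ ^ (-(Δ+1)) := by
        rw [Real.div_rpow hL0.le (by linarith), div_eq_mul_inv,
          ← Real.rpow_neg (by linarith : (0:ℝ) ≤ p₀)]
      -- ε^(-q) ≤ sum over the two branches
      have hmin : ε ^ (-((1 + Δ) / p₀ * p)) ≤ (p₀ - 1) ^ (-((1 + Δ) / p₀ * p))
          + (p₀ / L) ^ (-((1 + Δ) / p₀ * p)) := by
        rcases min_cases (p₀ - 1) (p₀ / L) with ⟨h, _⟩ | ⟨h, _⟩ <;>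
          rw [hεdef, h]
        · have : (0:ℝ) ≤ (p₀ / L) ^ (-((1 + Δ) / p₀ * p)) :=
            (Real.rpow_pos_of_pos (div_pos (by linarith) hL0) _).le
          linarith
        · have : (0:ℝ) ≤ (p₀ - 1) ^ (-((1 + Δ) / p₀ * p)) :=
            (Real.rpow_pos_of_pos (by linarith) _).le
          linarith
      have hbr1 : (p₀ - 1) ^ (-((1 + Δ) / p₀ * p)) ≤ (p₀ - 1) ^ (-(Δ+1)) + 1 :=
        aux_rpow_bound (by linarith) hq0 hqm
      have hbr2 : (p₀ / L) ^ (-((1 + Δ) / p₀ * p))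
          ≤ L ^ (Δ + 1) * p₀ ^ (-(Δ+1)) + 1 := by
        have hinv : (p₀ / L) ^ (-((1 + Δ) / p₀ * p)) = (L / p₀) ^ ((1 + Δ) / p₀ * p) := by
          rw [Real.rpow_neg (by positivity), ← Real.inv_rpow (by positivity), inv_div]
        rw [hinv, ← hLp0]
        exact aux_rpow_bound' (by positivity) hq0 hqm
      have hmul : (p₀ - 1) ^ (-(Δ+1)) + 2
          ≤ ((p₀ - 1) ^ (-(Δ+1)) + 2) * (L ^ (Δ + 1) * (Real.log 2) ^ (-(Δ+1))) := by
        have hA : (0:ℝ) ≤ (p₀ - 1) ^ (-(Δ+1)) + 2 := by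
          have := (Real.rpow_pos_of_pos (show (0:ℝ) < p₀ - 1 by linarith) (-(Δ+1))).le
          linarith
        exact le_mul_of_one_le_right hA (hLl2 ▸ honele)
      calc ε ^ (-((1 + Δ) / p₀ * p))
          ≤ ((p₀ - 1) ^ (-(Δ+1)) + 2) + L ^ (Δ + 1) * p₀ ^ (-(Δ+1)) := by linarith
        _ ≤ ((p₀ - 1) ^ (-(Δ+1)) + 2) * (L ^ (Δ + 1) * (Real.log 2) ^ (-(Δ+1)))
              + L ^ (Δ + 1) * p₀ ^ (-(Δ+1)) := by linarith
        _ = (((p₀ - 1) ^ (-(Δ+1)) + 2) * (Real.log 2) ^ (-(Δ+1)) + p₀ ^ (-(Δ+1)))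
              * L ^ (Δ + 1) := by ring
    calc t ^ (-p) * ε ^ (-(1 + Δ) / p₀ * p)
        ≤ (Real.exp p₀ * t ^ (-p₀)) * ((((p₀ - 1) ^ (-(Δ+1)) + 2) * (Real.log 2) ^ (-(Δ+1))
            + p₀ ^ (-(Δ+1))) * L ^ (Δ + 1)) := by
          apply mul_le_mul h1 h2 (Real.rpow_pos_of_pos hε0 _).le
          positivity
      _ = C₂ * t ^ (-p₀) * L ^ (Δ + 1) := by rw [hC₂]; ring
  calc tailFn P f t ≤ ENNReal.ofReal (t ^ (-p)) * ∫⁻ x, ENNReal.ofReal (|f x| ^ p) ∂P := cheb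
    _ ≤ ENNReal.ofReal (t ^ (-p)) * ENNReal.ofReal (ε ^ (-(1 + Δ) / p₀ * p)) :=
        mul_le_mul_right hint _
    _ = ENNReal.ofReal (t ^ (-p) * ε ^ (-(1 + Δ) / p₀ * p)) :=
        (ENNReal.ofReal_mul (Real.rpow_pos_of_pos ht0 _).le).symm
    _ ≤ ENNReal.ofReal (C₂ * t ^ (-p₀) * (Real.log t) ^ (Δ + 1)) :=
        ENNReal.ofReal_le_ofReal key
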